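/- With R = K⟦f₁,…,f_s⟧ as in the context, the set {f₁,…,f_s} is a basis of R (i.e. o(R) = ⟨o(f₁),…,o(f_s)⟩) if and only if for every f ∈ R and every pair (g,r) with g ∈ R, r ∈ K⟦x⟧, f = g + r and supp(r) ⊆ ℕ∖⟨o(f₁),…,o(f_s)⟩, one has r = 0. -/

import Mathlib

set_option synthInstance.maxHeartbeats 1000000
set_option maxHeartbeats 1000000

open PowerSeries

/-- The order of a formal power series: the least `i` such that the coefficient of `x^i`
is nonzero (junk value `0` for the zero series). -/
noncomputable def ord (K : Type*) [Field K] (f : PowerSeries K) : ℕ :=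
  sInf {i | coeff (R := K) i f ≠ 0}

/-- The set of orders of nonzero elements of a subalgebra `R ⊆ K⟦x⟧`. -/
def oSet (K : Type*) [Field K] (R : Subalgebra K (PowerSeries K)) : Set ℕ :=
  {n | ∃ f ∈ R, f ≠ 0 ∧ ord K f = n}

/-- The quotient `K⟦x⟧/R` has finite length as an `R`-module. -/
def FiniteLengthQuot (K : Type*) [Field K] (R : Subalgebra K (PowerSeries K)) : Prop :=
  IsFiniteLength R (PowerSeries K ⧸ LinearMap.range (Algebra.linearMap R (PowerSeries K)))

/-- The closure of a subalgebra of `K⟦x⟧` in the `x`-adic topology: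
`f` belongs to the closure of `S` iff for every `n` there is an element of `S`
agreeing with `f` on all coefficients up to `n`. -/
def adicClosure {K : Type*} [Field K] (S : Subalgebra K (PowerSeries K)) :
    Subalgebra K (PowerSeries K) where
  carrier := {f | ∀ n : ℕ, ∃ p ∈ S, ∀ i ≤ n, coeff (R := K) i f = coeff (R := K) i p}
  add_mem' := by
    intro f g hf hg n
    obtain ⟨p, hpS, hp⟩ := hf n
    obtain ⟨q, hqS, hq⟩ := hg n
    exact ⟨p + q, S.add_mem hpS hqS, fun i hi => by
      simp [map_add, hp i hi, hq i hi]⟩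
  mul_mem' := by
    intro f g hf hg n
    obtain ⟨p, hpS, hp⟩ := hf n
    obtain ⟨q, hqS, hq⟩ := hg n
    refine ⟨p * q, S.mul_mem hpS hqS, fun i hi => ?_⟩
    rw [coeff_mul, coeff_mul]
    refine Finset.sum_congr rfl fun ab hab => ?_
    have h := Finset.HasAntidiagonal.mem_antidiagonal.mp hab
    rw [hp ab.1 (by omega), hq ab.2 (by omega)]
  algebraMap_mem' := fun r => fun n => ⟨algebraMap K _ r, S.algebraMap_mem r, fun i _ => rfl⟩

/-- `K⟦f₁,…,f_s⟧`, the subalgebra of `K⟦x⟧` consisting of all power series of the form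
`P(f₁,…,f_s)` with `P ∈ K⟦X₁,…,X_s⟧` (for `fᵢ` of positive order), realized as the
`x`-adic closure of the subalgebra generated by `f₁, …, f_s`; this closure coincides with
the image of the substitution homomorphism `K⟦X₁,…,X_s⟧ → K⟦x⟧`, `Xᵢ ↦ fᵢ`. -/
noncomputable def seriesAlgebra {K : Type*} [Field K] {s : ℕ} (f : Fin s → PowerSeries K) :
    Subalgebra K (PowerSeries K) :=
  adicClosure (Algebra.adjoin K (Set.range f))

section Aux
variable {K : Type*} [Field K]

lemma ord_spec {f : PowerSeries K} (hf : f ≠ 0) : coeff (R := K) (ord K f) f ≠ 0 := by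
  have : ord K f ∈ {i | coeff (R := K) i f ≠ 0} := by
    apply Nat.sInf_mem
    rw [Set.nonempty_def]
    by_contra h
    push_neg at h
    exact hf (PowerSeries.ext fun n => not_not.mp (h n))
  exact this

lemma coeff_of_lt_ord {f : PowerSeries K} {i : ℕ} (h : i < ord K f) : coeff (R := K) i f = 0 :=
  not_not.mp (Nat.notMem_of_lt_sInf h)

lemma ord_eq {f : PowerSeries K} {n : ℕ} (h1 : coeff (R := K) n f ≠ 0)
    (h2 : ∀ i < n, coeff (R := K) i f = 0) : ord K f = n := by
  refine le_antisymm (Nat.sInf_le h1) ?_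
  by_contra hlt
  push_neg at hlt
  have hf : f ≠ 0 := fun h => h1 (by simp [h])
  exact ord_spec hf (h2 _ hlt)

lemma ord_mul {g h : PowerSeries K} (hg : g ≠ 0) (hh : h ≠ 0) :
    ord K (g * h) = ord K g + ord K h := by
  apply ord_eq
  · rw [coeff_mul, Finset.sum_eq_single (ord K g, ord K h)]
    · exact mul_ne_zero (ord_spec hg) (ord_spec hh)
    · rintro ⟨a, b⟩ hab hne
      have hab' := Finset.HasAntidiagonal.mem_antidiagonal.mp hab
      rcases lt_or_ge a (ord K g) with h1 | h1
      · rw [coeff_of_lt_ord h1, zero_mul]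
      · rcases h1.lt_or_eq with h2 | h2
        · rw [coeff_of_lt_ord (show b < ord K h by omega), mul_zero]
        · exact absurd (by rw [← h2, show b = ord K h by omega]) hne
    · intro hni; simp at hni
  · intro i hi
    rw [coeff_mul]
    apply Finset.sum_eq_zero
    rintro ⟨a, b⟩ hab
    have hab' := Finset.HasAntidiagonal.mem_antidiagonal.mp hab
    rcases lt_or_ge a (ord K g) with h1 | h1
    · rw [coeff_of_lt_ord h1, zero_mul]
    · rw [coeff_of_lt_ord (show b < ord K h by omega), mul_zero]

end Aux

section Main
variable {K : Type*} [Field K]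

lemma le_adicClosure (S : Subalgebra K (PowerSeries K)) : S ≤ adicClosure S :=
  fun p hp n => ⟨p, hp, fun _ _ => rfl⟩

lemma adicClosure_limit {S : Subalgebra K (PowerSeries K)} {g : PowerSeries K}
    (h : ∀ n, ∃ p ∈ adicClosure S, ∀ i ≤ n, coeff (R := K) i g = coeff (R := K) i p) :
    g ∈ adicClosure S := by
  intro n
  obtain ⟨p, hp, hpg⟩ := h n
  obtain ⟨q, hq, hqp⟩ := hp n
  exact ⟨q, hq, fun i hi => (hpg i hi).trans (hqp i hi)⟩

lemma closure_sub_oSet {s : ℕ} (f : Fin s → PowerSeries K)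
    (hf0 : ∀ i, f i ≠ 0) :
    ∀ n ∈ AddSubmonoid.closure (Set.range fun j => ord K (f j)),
      n ∈ oSet K (seriesAlgebra f) := by
  intro n hn
  induction hn using AddSubmonoid.closure_induction with
  | mem x hx =>
    obtain ⟨j, rfl⟩ := hx
    exact ⟨f j, le_adicClosure _ (Algebra.subset_adjoin ⟨j, rfl⟩), hf0 j, rfl⟩
  | zero =>
    refine ⟨1, one_mem _, one_ne_zero, ord_eq ?_ ?_⟩
    · simp
    · intro i hi; omega
  | add a b ha hb iha ihb =>
    obtain ⟨g1, hg1R, hg1, rfl⟩ := iha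
    obtain ⟨g2, hg2R, hg2, rfl⟩ := ihb
    exact ⟨g1 * g2, mul_mem hg1R hg2R, mul_ne_zero hg1 hg2, ord_mul hg1 hg2⟩

end Main

/-- `{f₁,…,f_s}` is a basis of `R = K⟦f₁,…,f_s⟧` (i.e. `o(R) = ⟨o(f₁),…,o(f_s)⟩`) iff for
every `f ∈ R`, every decomposition `f = g + r` with `g ∈ R` and
`supp(r) ⊆ ℕ ∖ ⟨o(f₁),…,o(f_s)⟩` forces `r = 0`. -/
theorem stmt_5 (K : Type*) [Field K] {s : ℕ} (f : Fin s → PowerSeries K)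
    (hf0 : ∀ i, f i ≠ 0) (hford : ∀ i, 0 < ord K (f i))
    (hlen : FiniteLengthQuot K (seriesAlgebra f)) :
    (oSet K (seriesAlgebra f)
        = ↑(AddSubmonoid.closure (Set.range fun j => ord K (f j)))) ↔
      (∀ F ∈ seriesAlgebra f, ∀ g ∈ seriesAlgebra f, ∀ r : PowerSeries K,
        F = g + r →
        (∀ i : ℕ, coeff (R := K) i r ≠ 0 →
          i ∉ AddSubmonoid.closure (Set.range fun j => ord K (f j))) →
        r = 0) := by
  classical
  set S := AddSubmonoid.closure (Set.range fun j => ord K (f j)) with hSdef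
  constructor
  · -- basis ⟹ uniqueness
    intro heq F hF g hg r hFgr hsupp
    have hrR : r ∈ seriesAlgebra f := by
      have hr : r = F - g := by rw [hFgr]; ring
      rw [hr]; exact sub_mem hF hg
    by_contra hr0
    have hmem : ord K r ∈ oSet K (seriesAlgebra f) := ⟨r, hrR, hr0, rfl⟩
    rw [heq] at hmem
    exact hsupp _ (ord_spec hr0) hmem
  · -- uniqueness ⟹ basis
    intro huniq
    ext n
    simp only [SetLike.mem_coe]
    constructor
    · rintro ⟨h, hhR, hh0, rfl⟩
      by_contra hnS
      -- choose elements of each order in S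
      have hEx : ∀ m : ℕ, m ∈ S → ∃ w : PowerSeries K,
          w ∈ seriesAlgebra f ∧ w ≠ 0 ∧ ord K w = m := by
        intro m hm
        obtain ⟨w, hw1, hw2, hw3⟩ := closure_sub_oSet f hf0 m hm
        exact ⟨w, hw1, hw2, hw3⟩
      choose e heR heNe heOrd using hEx
      -- the greedy approximation sequence
      set g : ℕ → PowerSeries K := fun k => Nat.rec 0
        (fun m gm => if hm : m ∈ S then
          gm + ((coeff (R := K) m (h - gm)) / (coeff (R := K) m (e m hm))) • (e m hm) else gm) k with hgdef
      have hgsucc : ∀ m, g (m + 1) = if hm : m ∈ S then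
          g m + ((coeff (R := K) m (h - g m)) / (coeff (R := K) m (e m hm))) • (e m hm) else g m :=
        fun m => rfl
      have hgR : ∀ k, g k ∈ seriesAlgebra f := by
        intro k
        induction k with
        | zero => exact zero_mem _
        | succ m ih =>
          rw [hgsucc]
          split_ifs with hm
          · exact add_mem ih (Subalgebra.smul_mem _ (heR m hm) _)
          · exact ih
      have hlc : ∀ m (hm : m ∈ S), coeff (R := K) m (e m hm) ≠ 0 := by
        intro m hm
        have := ord_spec (heNe m hm)
        rwa [heOrd m hm] at this
      have hstab : ∀ m, ∀ i, i < m → coeff (R := K) i (g (m + 1)) = coeff (R := K) i (g m) := by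
        intro m i hi
        rw [hgsucc]
        split_ifs with hm
        · rw [map_add, map_smul,
            coeff_of_lt_ord (show i < ord K (e m hm) by rw [heOrd m hm]; exact hi),
            smul_zero, add_zero]
        · rfl
      have hstab2 : ∀ i k, i < k → coeff (R := K) i (g k) = coeff (R := K) i (g (i + 1)) := by
        intro i k
        induction k with
        | zero => omega
        | succ m ih =>
          intro h'
          rcases Nat.lt_succ_iff_lt_or_eq.mp h' with h2 | h2
          · rw [hstab m i h2]; exact ih h2
          · subst h2; rfl
      have hkill : ∀ k, ∀ i, i < k → i ∈ S → coeff (R := K) i (h - g k) = 0 := by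
        intro k
        induction k with
        | zero => omega
        | succ m ih =>
          intro i hi hiS
          rw [hgsucc]
          split_ifs with hm
          · rcases Nat.lt_succ_iff_lt_or_eq.mp hi with h2 | h2
            · rw [map_sub, map_add, map_smul, smul_eq_mul,
                coeff_of_lt_ord (show i < ord K (e m hm) by rw [heOrd m hm]; exact h2),
                mul_zero, add_zero, ← map_sub]
              exact ih i h2 hiS
            · subst h2
              rw [map_sub, map_add, map_smul, smul_eq_mul,
                div_mul_cancel₀ _ (hlc i hm), map_sub]
              ring
          · rcases Nat.lt_succ_iff_lt_or_eq.mp hi with h2 | h2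
            · exact ih i h2 hiS
            · subst h2; exact absurd hiS hm
      -- the limit
      set G : PowerSeries K := PowerSeries.mk (fun i => coeff (R := K) i (g (i + 1))) with hGdef
      have hGc : ∀ i, coeff (R := K) i G = coeff (R := K) i (g (i + 1)) := fun i => coeff_mk i _
      have hGR : G ∈ seriesAlgebra f := by
        apply adicClosure_limit
        intro n
        refine ⟨g (n + 1), hgR (n + 1), fun i hi => ?_⟩
        rw [hGc i, hstab2 i (n + 1) (by omega)]
      set r : PowerSeries K := h - G with hrdef
      have hsupp : ∀ i : ℕ, coeff (R := K) i r ≠ 0 → i ∉ S := by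
        intro i hi hiS
        apply hi
        rw [hrdef, map_sub, hGc i, ← map_sub]
        exact hkill (i + 1) i (Nat.lt_succ_self i) hiS
      have hg0 : ∀ k, k ≤ ord K h + 1 → g k = 0 := by
        intro k
        induction k with
        | zero => intro _; rfl
        | succ m ih =>
          intro hk
          have hm' : m ≤ ord K h := by omega
          rw [hgsucc]
          split_ifs with hm
          · rcases lt_or_eq_of_le hm' with h2 | h2
            · rw [ih (by omega), sub_zero, coeff_of_lt_ord h2, zero_div, zero_smul, add_zero]
            · exact absurd (h2 ▸ hm) hnS
          · exact ih (by omega)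
      have hrn : coeff (R := K) (ord K h) r ≠ 0 := by
        rw [hrdef, map_sub, hGc, hg0 (ord K h + 1) le_rfl, map_zero, sub_zero]
        exact ord_spec hh0
      have hzero : r = 0 := huniq h hhR G hGR r (by rw [hrdef]; ring) hsupp
      exact hrn (by rw [hzero, map_zero])
    · exact fun hn => closure_sub_oSet f hf0 n hn
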